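/- Let α > 0, ω > 0 and β ≠ 0 with 2β² > α²ω². Then there exist ε₀ > 0 and functions I, θ : (0, ε₀) → ℝ such that for every ε ∈ (0, ε₀): I(ε) > 0, 0 < I(ε) < ω²/2, the pair (I(ε), θ(ε)) satisfies the symmetric fixed-point equations (S) (so β sin θ(ε) > 0), and (I(ε) − ω²/2)/ε → −√(2β² − α²ω²)/ω as ε → 0⁺. (This is the saddle fixed point Q_ε with expansion I₁ = ω²/2 − ε ω^{−1}√(2β² − α²ω²) + ⋯.) -/

import Mathlib

open Filter Topology

lemma exists_cos_sin (x y : ℝ) (h : x ^ 2 + y ^ 2 = 1) :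
    ∃ θ : ℝ, Real.cos θ = x ∧ Real.sin θ = y := by
  have hx1 : -1 ≤ x := by nlinarith [sq_nonneg y]
  have hx2 : x ≤ 1 := by nlinarith [sq_nonneg y]
  have hc : Real.cos (Real.arccos x) = x := Real.cos_arccos hx1 hx2
  have hs : Real.sin (Real.arccos x) = Real.sqrt (y ^ 2) := by
    rw [Real.sin_arccos]; congr 1; linarith
  rcases le_or_gt 0 y with hy | hy
  · exact ⟨Real.arccos x, hc, by rw [hs, Real.sqrt_sq hy]⟩
  · refine ⟨-Real.arccos x, by rw [Real.cos_neg, hc], ?_⟩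
    rw [Real.sin_neg, hs, Real.sqrt_sq_eq_abs, abs_of_neg hy, neg_neg]

set_option maxHeartbeats 1000000 in
/-- Existence of the saddle fixed point `Q_ε`, with expansion
`I₁ = ω²/2 − ε ω⁻¹ √(2β² − α²ω²) + ⋯`. -/
theorem saddle_Qeps_exists
    (α ω β : ℝ) (hα : 0 < α) (hω : 0 < ω) (hβ : β ≠ 0)
    (h2β : α ^ 2 * ω ^ 2 < 2 * β ^ 2) :
    ∃ (ε₀ : ℝ) (_ : 0 < ε₀) (I θ : ℝ → ℝ),
      (∀ ε ∈ Set.Ioo (0 : ℝ) ε₀,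
        0 < I ε ∧ I ε < ω ^ 2 / 2 ∧
        β * Real.cos (θ ε) = -(α * Real.sqrt (I ε)) ∧
        ε * β * Real.sin (θ ε) = -(Real.sqrt (I ε) * (I ε - ω ^ 2 / 2)) ∧
        0 < β * Real.sin (θ ε)) ∧
      Tendsto (fun ε => (I ε - ω ^ 2 / 2) / ε) (𝓝[>] 0)
        (𝓝 (-(Real.sqrt (2 * β ^ 2 - α ^ 2 * ω ^ 2) / ω))) := by
  have hβ2 : 0 < β ^ 2 := by positivity
  have hD : 0 < 2 * β ^ 2 - α ^ 2 * ω ^ 2 := by linarith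
  set c : ℝ := Real.sqrt (2 * β ^ 2 - α ^ 2 * ω ^ 2) / ω with hc_def
  have hc0 : 0 ≤ c := div_nonneg (Real.sqrt_nonneg _) hω.le
  have hcsq : c ^ 2 = (2 * β ^ 2 - α ^ 2 * ω ^ 2) / ω ^ 2 := by
    rw [hc_def, div_pow, Real.sq_sqrt hD.le]
  set M : ℝ := c + 1 with hM_def
  have hM : 0 < M := by linarith
  have hω2 : (0:ℝ) < ω ^ 2 := by positivity
  have hMc : M ^ 2 = c ^ 2 + 2 * c + 1 := by rw [hM_def]; ring
  have hbase : ω ^ 2 / 2 * (α ^ 2 + c ^ 2) = β ^ 2 := by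
    rw [hcsq]; field_simp; ring
  have hKey : β ^ 2 < ω ^ 2 / 2 * (α ^ 2 + M ^ 2) := by
    have h1 : ω ^ 2 / 2 * (α ^ 2 + M ^ 2) - β ^ 2 = ω ^ 2 / 2 * (2 * c + 1) := by
      linear_combination (ω ^ 2 / 2) * hMc + hbase
    have h2 : 0 < ω ^ 2 / 2 * (2 * c + 1) := by
      apply mul_pos (by positivity); linarith
    linarith
  set δ : ℝ := ω ^ 2 / 2 * (α ^ 2 + M ^ 2) - β ^ 2 with hδ_def
  have hδ : 0 < δ := by rw [hδ_def]; linarith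
  set ε₀ : ℝ := δ / (M * (α ^ 2 + M ^ 2)) with hε₀_def
  have hε₀ : 0 < ε₀ := by positivity
  -- existence of the fixed point for each ε
  have hEx : ∀ ε : ℝ, ∃ Iv θv : ℝ, ε ∈ Set.Ioo (0:ℝ) ε₀ →
      (0 < Iv ∧ Iv < ω ^ 2 / 2 ∧ ω ^ 2 / 2 - M * ε < Iv ∧
        β * Real.cos θv = -(α * Real.sqrt Iv) ∧
        ε * β * Real.sin θv = -(Real.sqrt Iv * (Iv - ω ^ 2 / 2)) ∧
        0 < β * Real.sin θv) := by
    intro ε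
    by_cases hε : ε ∈ Set.Ioo (0:ℝ) ε₀
    · obtain ⟨hε1, hε2⟩ := hε
      have hεne : ε ≠ 0 := ne_of_gt hε1
      set g : ℝ → ℝ := fun x => x * (x - ω ^ 2 / 2) ^ 2 + ε ^ 2 * (α ^ 2 * x - β ^ 2)
        with hg_def
      have hεbound : ε * (M * (α ^ 2 + M ^ 2)) < δ := by
        have h := mul_lt_mul_of_pos_right hε2
          (show (0:ℝ) < M * (α ^ 2 + M ^ 2) by positivity)
        rwa [hε₀_def, div_mul_cancel₀ _
          (ne_of_gt (show (0:ℝ) < M * (α ^ 2 + M ^ 2) by positivity))] at h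
      rw [hδ_def] at hεbound
      have hapos : β ^ 2 < (ω ^ 2 / 2 - M * ε) * (α ^ 2 + M ^ 2) := by
        have hexp : (ω ^ 2 / 2 - M * ε) * (α ^ 2 + M ^ 2)
            = ω ^ 2 / 2 * (α ^ 2 + M ^ 2) - ε * (M * (α ^ 2 + M ^ 2)) := by ring
        rw [hexp]; linarith
      have ha0 : 0 < ω ^ 2 / 2 - M * ε := by
        by_contra h
        push_neg at h
        have := mul_nonpos_of_nonpos_of_nonneg h
          (by positivity : (0:ℝ) ≤ α ^ 2 + M ^ 2)
        linarith
      have hga : 0 < g (ω ^ 2 / 2 - M * ε) := by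
        have heq : g (ω ^ 2 / 2 - M * ε)
            = ε ^ 2 * ((ω ^ 2 / 2 - M * ε) * (α ^ 2 + M ^ 2) - β ^ 2) := by
          rw [hg_def]; ring
        rw [heq]
        have h3 : 0 < (ω ^ 2 / 2 - M * ε) * (α ^ 2 + M ^ 2) - β ^ 2 := by linarith
        positivity
      have hgb : g (ω ^ 2 / 2) < 0 := by
        have heq : g (ω ^ 2 / 2) = ε ^ 2 * (α ^ 2 * (ω ^ 2 / 2) - β ^ 2) := by
          rw [hg_def]; ring
        rw [heq]
        exact mul_neg_of_pos_of_neg (pow_pos hε1 2) (by linarith)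
      have hcontg : ContinuousOn g (Set.Icc (ω ^ 2 / 2 - M * ε) (ω ^ 2 / 2)) := by
        apply Continuous.continuousOn; rw [hg_def]; continuity
      have hab : ω ^ 2 / 2 - M * ε ≤ ω ^ 2 / 2 := sub_le_self _ (mul_pos hM hε1).le
      obtain ⟨Iv, hIvmem, hgIv⟩ :=
        intermediate_value_Ioo' hab hcontg ⟨hgb, hga⟩
      obtain ⟨hIv1, hIv2⟩ := hIvmem
      have hIpos : 0 < Iv := lt_trans ha0 hIv1
      -- the squared equation
      have hgIv' : Iv * (Iv - ω ^ 2 / 2) ^ 2 + ε ^ 2 * (α ^ 2 * Iv - β ^ 2) = 0 := hgIv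
      have hIeq : Iv * (Iv - ω ^ 2 / 2) ^ 2 = ε ^ 2 * (β ^ 2 - α ^ 2 * Iv) := by
        linear_combination hgIv'
      have hprod : 0 < Iv * (Iv - ω ^ 2 / 2) ^ 2 := by
        have hne : Iv - ω ^ 2 / 2 ≠ 0 := ne_of_lt (by linarith)
        positivity
      have hβI : 0 < β ^ 2 - α ^ 2 * Iv := by
        have h2 : 0 < ε ^ 2 * (β ^ 2 - α ^ 2 * Iv) := hIeq ▸ hprod
        have h3 := div_pos h2 (pow_pos hε1 2)
        rwa [mul_div_cancel_left₀ _ (pow_ne_zero 2 hεne)] at h3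
      set s : ℝ := Real.sqrt Iv with hs_def
      have hs : 0 < s := Real.sqrt_pos.mpr hIpos
      have hs2 : s ^ 2 = Iv := Real.sq_sqrt hIpos.le
      set x : ℝ := -(α * s) / β with hx_def
      set y : ℝ := -(s * (Iv - ω ^ 2 / 2)) / (ε * β) with hy_def
      have hx2 : x ^ 2 = α ^ 2 * Iv / β ^ 2 := by
        have h1 : x ^ 2 = α ^ 2 * s ^ 2 / β ^ 2 := by rw [hx_def]; ring
        rw [h1, hs2]
      have hy2 : y ^ 2 = (β ^ 2 - α ^ 2 * Iv) / β ^ 2 := by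
        have h1 : y ^ 2 = s ^ 2 * (Iv - ω ^ 2 / 2) ^ 2 / (ε ^ 2 * β ^ 2) := by
          rw [hy_def]; ring
        rw [h1, hs2, div_eq_div_iff
          (mul_ne_zero (pow_ne_zero 2 hεne) (ne_of_gt hβ2)) (ne_of_gt hβ2)]
        linear_combination β ^ 2 * hIeq
      have hxy : x ^ 2 + y ^ 2 = 1 := by
        rw [hx2, hy2, ← add_div]
        rw [show α ^ 2 * Iv + (β ^ 2 - α ^ 2 * Iv) = β ^ 2 by ring]
        exact div_self (ne_of_gt hβ2)
      obtain ⟨θv, hcos, hsin⟩ := exists_cos_sin x y hxy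
      refine ⟨Iv, θv, fun _ => ⟨hIpos, hIv2, hIv1, ?_, ?_, ?_⟩⟩
      · rw [hcos, hx_def, ← hs_def]; field_simp
      · rw [hsin, hy_def, ← hs_def]; field_simp
      · rw [hsin, hy_def]
        have h1 : β * (-(s * (Iv - ω ^ 2 / 2)) / (ε * β)) = s * (ω ^ 2 / 2 - Iv) / ε := by
          field_simp; ring
        rw [h1]
        exact div_pos (mul_pos hs (by linarith)) hε1
    · exact ⟨ω ^ 2 / 2, 0, fun h => absurd h hε⟩
  choose I θ hIθ using hEx
  refine ⟨ε₀, hε₀, I, θ, fun ε hε => ?_, ?_⟩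
  · obtain ⟨h1, h2, _, h4, h5, h6⟩ := hIθ ε hε
    exact ⟨h1, h2, h4, h5, h6⟩
  · -- the limit
    have hmem : Set.Ioo (0:ℝ) ε₀ ∈ 𝓝[>] (0:ℝ) :=
      Ioo_mem_nhdsGT_of_mem ⟨le_refl 0, hε₀⟩
    have hIlim : Tendsto I (𝓝[>] (0:ℝ)) (𝓝 (ω ^ 2 / 2)) := by
      apply tendsto_of_tendsto_of_tendsto_of_le_of_le'
        (g := fun ε => ω ^ 2 / 2 - M * ε) (h := fun _ => ω ^ 2 / 2)
      · have h1 : Tendsto (fun ε : ℝ => ω ^ 2 / 2 - M * ε) (𝓝 (0:ℝ))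
            (𝓝 (ω ^ 2 / 2 - M * 0)) :=
          tendsto_const_nhds.sub (tendsto_const_nhds.mul tendsto_id)
        simpa using h1.mono_left nhdsWithin_le_nhds
      · exact tendsto_const_nhds
      · filter_upwards [hmem] with ε hε
        exact (hIθ ε hε).2.2.1.le
      · filter_upwards [hmem] with ε hε
        exact (hIθ ε hε).2.1.le
    have hcont : ContinuousAt (fun t : ℝ => -Real.sqrt ((β ^ 2 - α ^ 2 * t) / t))
        (ω ^ 2 / 2) := by
      apply ContinuousAt.neg
      apply Real.continuous_sqrt.continuousAt.comp
      exact ContinuousAt.div (by fun_prop) (by fun_prop) (by positivity)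
    have hval : -Real.sqrt ((β ^ 2 - α ^ 2 * (ω ^ 2 / 2)) / (ω ^ 2 / 2))
        = -(Real.sqrt (2 * β ^ 2 - α ^ 2 * ω ^ 2) / ω) := by
      have h1 : (β ^ 2 - α ^ 2 * (ω ^ 2 / 2)) / (ω ^ 2 / 2)
          = (2 * β ^ 2 - α ^ 2 * ω ^ 2) / ω ^ 2 := by
        field_simp
      rw [h1, Real.sqrt_div hD.le, Real.sqrt_sq hω.le]
    have h2 : Tendsto (fun ε => -Real.sqrt ((β ^ 2 - α ^ 2 * I ε) / (I ε)))
        (𝓝[>] (0:ℝ)) (𝓝 (-(Real.sqrt (2 * β ^ 2 - α ^ 2 * ω ^ 2) / ω))) := by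
      rw [← hval]
      exact hcont.tendsto.comp hIlim
    apply h2.congr'
    filter_upwards [hmem] with ε hε
    obtain ⟨hI1, hI2, _, hcos, hsin, _⟩ := hIθ ε hε
    obtain ⟨hε1, _⟩ := hε
    set s : ℝ := Real.sqrt (I ε) with hs_def
    have hs : 0 < s := Real.sqrt_pos.mpr hI1
    have hs2 : s ^ 2 = I ε := Real.sq_sqrt hI1.le
    -- recover the squared equation
    have hc2 : β ^ 2 * Real.cos (θ ε) ^ 2 = α ^ 2 * I ε := by
      have h := congrArg (fun t => t ^ 2) hcos
      linear_combination h + α ^ 2 * hs2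
    have hsin2 : ε ^ 2 * β ^ 2 * Real.sin (θ ε) ^ 2
        = I ε * (I ε - ω ^ 2 / 2) ^ 2 := by
      have h := congrArg (fun t => t ^ 2) hsin
      linear_combination h + (I ε - ω ^ 2 / 2) ^ 2 * hs2
    have hpy := Real.sin_sq_add_cos_sq (θ ε)
    have hIeq : I ε * (I ε - ω ^ 2 / 2) ^ 2 = ε ^ 2 * (β ^ 2 - α ^ 2 * I ε) := by
      linear_combination -hsin2 - ε ^ 2 * hc2 + ε ^ 2 * β ^ 2 * hpy
    have hq : (β ^ 2 - α ^ 2 * I ε) / (I ε) = ((ω ^ 2 / 2 - I ε) / ε) ^ 2 := by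
      rw [div_pow, div_eq_div_iff (ne_of_gt hI1) (pow_ne_zero 2 (ne_of_gt hε1))]
      linear_combination -hIeq
    show -Real.sqrt ((β ^ 2 - α ^ 2 * I ε) / (I ε)) = (I ε - ω ^ 2 / 2) / ε
    rw [hq, Real.sqrt_sq (div_nonneg (by linarith) hε1.le)]
    ring
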